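/- For each n ≥ 1, define the polynomial Ẽ_n(x) by Ẽ_n(k) = h_n(1,2,…,k+1) for all non-negative integers k. Then the coefficient of x in Ẽ_n(x) equals n + Σ_{j=1}^{n} B_j / j, with Bernoulli convention B_1 = 1/2. -/

import Mathlib

open scoped Classical

/-- The Stirling number of the second kind `S(m, k)`: the number of partitions of an
`m`-element set into `k` non-empty blocks. -/
noncomputable def stirling2 (m k : ℕ) : ℕ :=
  Nat.card {P : Finpartition (Finset.univ : Finset (Fin m)) // P.parts.card = k}

/-- The complete homogeneous symmetric polynomial of degree `n` evaluated at
`(1, 2, …, k)`, i.e. `∑_{1 ≤ z₁ ≤ ⋯ ≤ z_n ≤ k} z₁ ⋯ z_n`. -/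
noncomputable def hNat (n k : ℕ) : ℕ :=
  ∑ f ∈ Finset.univ.filter (fun f : Fin n → Fin k => Monotone f), ∏ i, ((f i : ℕ) + 1)


lemma hNat_zero (k : ℕ) : hNat 0 k = 1 := by
  rw [hNat, Finset.filter_true_of_mem]
  · simp
  · intro f _ a b _
    exact a.elim0

lemma hNat_succ_zero (n : ℕ) : hNat (n+1) 0 = 0 := by
  simp [hNat]

lemma hNat_one (n : ℕ) : hNat n 1 = 1 := by
  rw [hNat, Finset.filter_true_of_mem]
  · simp [Finset.card_univ]
  · intro f _ a b _
    exact le_of_eq (Subsingleton.elim _ _)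

lemma monotone_snoc {m n : ℕ} {g : Fin n → Fin (m+1)} (hg : Monotone g) :
    Monotone (Fin.snoc g (Fin.last m)) := by
  intro a b hab
  by_cases hb : b = Fin.last n
  · subst hb
    rw [Fin.snoc_last]
    exact Fin.le_last _
  · obtain ⟨b', rfl⟩ := Fin.exists_castSucc_eq.mpr hb
    have ha : a ≠ Fin.last n := fun h => hb (le_antisymm (Fin.le_last _) (h ▸ hab))
    obtain ⟨a', rfl⟩ := Fin.exists_castSucc_eq.mpr ha
    rw [Fin.snoc_castSucc, Fin.snoc_castSucc]
    exact hg (Fin.castSucc_le_castSucc_iff.mp hab)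

lemma hNat_rec (n m : ℕ) :
    hNat (n+1) (m+1) = hNat (n+1) m + (m+1) * hNat n (m+1) := by
  have hsplit := Finset.sum_filter_add_sum_filter_not
      (Finset.filter (fun f : Fin (n+1) → Fin (m+1) => Monotone f) Finset.univ)
      (fun f => f (Fin.last n) = Fin.last m)
      (fun f => ∏ i, ((f i : ℕ) + 1))
  have h1 : ∑ f ∈ (Finset.filter (fun f : Fin (n+1) → Fin (m+1) => Monotone f)
        Finset.univ).filter (fun f => ¬ f (Fin.last n) = Fin.last m),
        ∏ i, ((f i : ℕ) + 1) = hNat (n+1) m := by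
    rw [hNat]
    refine Finset.sum_bij' (fun f hf j => (⟨(f j : ℕ), ?_⟩ : Fin m))
      (fun g _ j => (g j).castSucc) ?_ ?_ ?_ ?_ ?_
    · have hmono : Monotone f := (Finset.mem_filter.mp (Finset.mem_filter.mp hf).1).2
      have hlt : (f (Fin.last n) : ℕ) < m := Fin.val_lt_last (Finset.mem_filter.mp hf).2
      exact lt_of_le_of_lt (hmono (Fin.le_last j)) hlt
    · intro f hf
      have hmono : Monotone f := (Finset.mem_filter.mp (Finset.mem_filter.mp hf).1).2
      simp only [Finset.mem_filter, Finset.mem_univ, true_and]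
      intro a b hab
      exact hmono hab
    · intro g hg
      have hmono : Monotone g := (Finset.mem_filter.mp hg).2
      simp only [Finset.mem_filter, Finset.mem_univ, true_and]
      constructor
      · intro a b hab
        exact Fin.castSucc_le_castSucc_iff.mpr (hmono hab)
      · intro hcon
        have := congrArg Fin.val hcon
        simp only [Fin.coe_castSucc, Fin.val_last] at this
        exact absurd this (Nat.ne_of_lt (g (Fin.last n)).isLt)
    · intro f hf
      funext j
      apply Fin.ext
      simp
    · intro g hg
      funext j
      apply Fin.ext
      simp
    · intro f hf
      apply Finset.prod_congr rfl
      intro j _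
      simp
  have h2 : ∑ f ∈ (Finset.filter (fun f : Fin (n+1) → Fin (m+1) => Monotone f)
        Finset.univ).filter (fun f => f (Fin.last n) = Fin.last m),
        ∏ i, ((f i : ℕ) + 1) = (m+1) * hNat n (m+1) := by
    rw [hNat, Finset.mul_sum]
    refine Finset.sum_bij' (fun f _ => f ∘ Fin.castSucc)
      (fun g _ => Fin.snoc g (Fin.last m)) ?_ ?_ ?_ ?_ ?_
    · intro f hf
      have hmono : Monotone f := (Finset.mem_filter.mp (Finset.mem_filter.mp hf).1).2
      simp only [Finset.mem_filter, Finset.mem_univ, true_and]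
      exact hmono.comp Fin.strictMono_castSucc.monotone
    · intro g hg
      have hmono : Monotone g := (Finset.mem_filter.mp hg).2
      simp only [Finset.mem_filter, Finset.mem_univ, true_and]
      exact ⟨monotone_snoc hmono, Fin.snoc_last _ _⟩
    · intro f hf
      have hlast : f (Fin.last n) = Fin.last m := (Finset.mem_filter.mp hf).2
      funext j
      refine Fin.lastCases ?_ ?_ j
      · simp [Fin.snoc_last, hlast]
      · intro i
        simp [Fin.snoc_castSucc]
    · intro g hg
      funext j
      simp [Fin.snoc_castSucc]
    · intro f hf
      have hlast : f (Fin.last n) = Fin.last m := (Finset.mem_filter.mp hf).2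
      rw [Fin.prod_univ_castSucc, hlast]
      simp [mul_comm]
  rw [hNat, ← hsplit, h1, h2, add_comm]

noncomputable def Hq (n m : ℕ) : ℚ := (hNat n m : ℚ)
noncomputable def Pq (r m : ℕ) : ℚ := ∑ j ∈ Finset.range m, ((j:ℚ)+1)^r

lemma Hq_zero (m : ℕ) : Hq 0 m = 1 := by simp [Hq, hNat_zero]
lemma Hq_succ_zero (n : ℕ) : Hq (n+1) 0 = 0 := by simp [Hq, hNat_succ_zero]
lemma Hq_one (n : ℕ) : Hq n 1 = 1 := by simp [Hq, hNat_one]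
lemma Hq_rec (n m : ℕ) : Hq (n+1) (m+1) = Hq (n+1) m + ((m:ℚ)+1) * Hq n (m+1) := by
  unfold Hq
  rw [hNat_rec]
  push_cast
  ring

lemma Pq_succ (r m : ℕ) : Pq r (m+1) = Pq r m + ((m:ℚ)+1)^r := by
  unfold Pq
  rw [Finset.sum_range_succ]

lemma geom (m : ℕ) : ∀ n : ℕ, Hq n (m+1) = ∑ s ∈ Finset.range (n+1), ((m:ℚ)+1)^s * Hq (n-s) m := by
  intro n
  induction n with
  | zero => simp [Hq_zero]
  | succ n IH =>
    rw [Hq_rec, IH, Finset.sum_range_succ' _ (n+1)]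
    simp only [Nat.succ_sub_succ, pow_zero, one_mul, Nat.sub_zero]
    rw [Finset.mul_sum]
    rw [Finset.sum_congr rfl (fun s _ => by ring :
      ∀ s ∈ Finset.range (n+1), ((m:ℚ)+1) * (((m:ℚ)+1)^s * Hq (n-s) m)
        = ((m:ℚ)+1)^(s+1) * Hq (n-s) m)]
    ring

lemma diag (g : ℕ → ℚ) : ∀ n : ℕ,
    ∑ r ∈ Finset.range n, ∑ s ∈ Finset.range (n-r), g (r+s)
      = ∑ u ∈ Finset.range n, ((u:ℚ)+1) * g u := by
  intro n
  induction n with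
  | zero => simp
  | succ n IH =>
    have step : ∀ r ∈ Finset.range (n+1),
        ∑ s ∈ Finset.range (n+1-r), g (r+s)
          = (∑ s ∈ Finset.range (n-r), g (r+s)) + g n := by
      intro r hr
      have hrn : r ≤ n := Nat.lt_succ_iff.mp (Finset.mem_range.mp hr)
      have h1 : n+1-r = (n-r)+1 := by omega
      rw [h1, Finset.sum_range_succ, Nat.add_sub_cancel' hrn]
    rw [Finset.sum_congr rfl step, Finset.sum_add_distrib, Finset.sum_const,
      Finset.card_range, Finset.sum_range_succ _ n, IH, Finset.sum_range_succ]
    simp only [Nat.sub_self, Finset.sum_range_zero, nsmul_eq_mul, add_zero]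
    push_cast
    ring

lemma swap (f : ℕ → ℕ → ℚ) (N : ℕ) :
    ∑ s ∈ Finset.range N, ∑ r ∈ Finset.range (N-s), f s r
      = ∑ r ∈ Finset.range N, ∑ s ∈ Finset.range (N-r), f s r := by
  have key : ∀ a : ℕ, ∀ P : ℕ → ℕ → ℚ, ∑ b ∈ Finset.range (N-a), P a b
      = ∑ b ∈ Finset.range N, if a + b < N then P a b else 0 := by
    intro a P
    have : Finset.range (N-a) = (Finset.range N).filter (fun b => a + b < N) := by
      ext b; simp; omega
    rw [this, Finset.sum_filter]
  rw [Finset.sum_congr rfl (fun s _ => key s f)]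
  rw [Finset.sum_comm]
  refine Finset.sum_congr rfl ?_
  intro r _
  rw [key r (fun a b => f b a)]
  refine Finset.sum_congr rfl ?_
  intro s _
  rw [Nat.add_comm s r]

lemma newton : ∀ m n : ℕ, (n:ℚ) * Hq n m
    = ∑ r ∈ Finset.range n, Pq (r+1) m * Hq (n-(r+1)) m := by
  intro m
  induction m with
  | zero =>
    intro n
    cases n with
    | zero => simp
    | succ n =>
      rw [Hq_succ_zero]
      rw [Finset.sum_congr rfl (fun r _ => by simp [Pq] :
        ∀ r ∈ Finset.range (n+1), Pq (r+1) 0 * Hq (n+1-(r+1)) 0 = 0)]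
      simp
  | succ m IH =>
    intro n
    set x : ℚ := (m:ℚ) + 1 with hx
    have key1 : ∀ s ∈ Finset.range (n+1),
        (n:ℚ) * (x^s * Hq (n-s) m)
          = x^s * (((n-s : ℕ):ℚ) * Hq (n-s) m) + (s:ℚ) * x^s * Hq (n-s) m := by
      intro s hs
      have hs' : s ≤ n := Nat.lt_succ_iff.mp (Finset.mem_range.mp hs)
      rw [Nat.cast_sub hs']
      ring
    have key2 : ∀ s ∈ Finset.range (n+1),
        x^s * (((n-s : ℕ):ℚ) * Hq (n-s) m) + (s:ℚ) * x^s * Hq (n-s) m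
          = (∑ r ∈ Finset.range (n-s), Pq (r+1) m * x^s * Hq (n-(s+(r+1))) m)
            + (s:ℚ) * x^s * Hq (n-s) m := by
      intro s _
      rw [IH (n-s), Finset.mul_sum]
      congr 1
      refine Finset.sum_congr rfl ?_
      intro r _
      rw [Nat.sub_sub]
      ring
    calc (n:ℚ) * Hq n (m+1)
        = ∑ s ∈ Finset.range (n+1), (n:ℚ) * (x^s * Hq (n-s) m) := by
          rw [geom m n, Finset.mul_sum]
      _ = ∑ s ∈ Finset.range (n+1),
            ((∑ r ∈ Finset.range (n-s), Pq (r+1) m * x^s * Hq (n-(s+(r+1))) m)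
              + (s:ℚ) * x^s * Hq (n-s) m) := by
          refine Finset.sum_congr rfl ?_
          intro s hs
          rw [key1 s hs, key2 s hs]
      _ = (∑ s ∈ Finset.range (n+1), ∑ r ∈ Finset.range (n-s),
              Pq (r+1) m * x^s * Hq (n-(s+(r+1))) m)
            + ∑ s ∈ Finset.range (n+1), (s:ℚ) * x^s * Hq (n-s) m := by
          rw [Finset.sum_add_distrib]
      _ = (∑ s ∈ Finset.range n, ∑ r ∈ Finset.range (n-s),
              Pq (r+1) m * x^s * Hq (n-(s+(r+1))) m)
            + ∑ u ∈ Finset.range n, ((u:ℚ)+1) * (x^(u+1) * Hq (n-(u+1)) m) := by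
          congr 1
          · rw [Finset.sum_range_succ]
            simp
          · rw [Finset.sum_range_succ' (fun s => (s:ℚ) * x^s * Hq (n-s) m) n]
            simp only [Nat.cast_zero, zero_mul, add_zero]
            refine Finset.sum_congr rfl ?_
            intro u _
            push_cast
            ring
      _ = ∑ r ∈ Finset.range n, Pq (r+1) (m+1) * Hq (n-(r+1)) (m+1) := by
          have hterm : ∀ r ∈ Finset.range n, Pq (r+1) (m+1) * Hq (n-(r+1)) (m+1)
              = (∑ s ∈ Finset.range (n-r), Pq (r+1) m * x^s * Hq (n-(r+(s+1))) m)
                + ∑ s ∈ Finset.range (n-r), x^((r+s)+1) * Hq (n-((r+s)+1)) m := by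
            intro r hr
            have hr' : r < n := Finset.mem_range.mp hr
            have hgeo : Hq (n-(r+1)) (m+1)
                = ∑ s ∈ Finset.range (n-r), x^s * Hq (n-(r+1)-s) m := by
              have h1 : n-(r+1)+1 = n-r := by omega
              rw [geom m (n-(r+1)), h1]
            rw [Pq_succ, hgeo, add_mul, Finset.mul_sum, Finset.mul_sum]
            congr 1
            · refine Finset.sum_congr rfl ?_
              intro s _
              have : n - (r+1) - s = n - (r+(s+1)) := by omega
              rw [this]
              ring
            · refine Finset.sum_congr rfl ?_
              intro s _
              have : n - (r+1) - s = n - ((r+s)+1) := by omega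
              rw [this, ← hx]
              ring
          rw [Finset.sum_congr rfl hterm, Finset.sum_add_distrib]
          congr 1
          · rw [swap (fun s r => Pq (r+1) m * x^s * Hq (n-(s+(r+1))) m) n]
            refine Finset.sum_congr rfl ?_
            intro r _
            refine Finset.sum_congr rfl ?_
            intro s _
            have : n - (s+(r+1)) = n - (r+(s+1)) := by omega
            rw [this]
          · rw [diag (fun u => x^(u+1) * Hq (n-(u+1)) m) n]

noncomputable def Q (r : ℕ) : Polynomial ℚ :=
  ∑ i ∈ Finset.range (r+1),
    Polynomial.C (bernoulli' i * ((r+1).choose i : ℚ) / ((r:ℚ)+1)) * (Polynomial.X + 1)^(r+1-i)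

lemma Q_eval (r k : ℕ) : (Q r).eval (k:ℚ) = Pq r (k+1) := by
  have h1 : Pq r (k+1) = ∑ j ∈ Finset.Ico 1 (k+1+1), (j:ℚ)^r := by
    rw [Finset.sum_Ico_eq_sum_range]
    simp only [Nat.add_sub_cancel]
    unfold Pq
    refine Finset.sum_congr rfl ?_
    intro j _
    push_cast
    ring
  rw [h1, sum_Ico_pow (k+1) r]
  unfold Q
  rw [Polynomial.eval_finset_sum]
  refine Finset.sum_congr rfl ?_
  intro i _
  simp only [Polynomial.eval_mul, Polynomial.eval_C, Polynomial.eval_pow,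
    Polynomial.eval_add, Polynomial.eval_X, Polynomial.eval_one]
  push_cast
  ring

lemma Q_eval_zero (r : ℕ) : (Q r).eval 0 = 1 := by
  have h := Q_eval r 0
  simp only [Nat.cast_zero, zero_add] at h
  rw [h]
  simp [Pq]

lemma Q_coeff_one (r : ℕ) : (Q r).coeff 1 = (r:ℚ) + bernoulli' r := by
  unfold Q
  rw [Polynomial.finset_sum_coeff]
  have hterm : ∀ i ∈ Finset.range (r+1),
      (Polynomial.C (bernoulli' i * ((r+1).choose i : ℚ) / ((r:ℚ)+1))
        * (Polynomial.X + 1)^(r+1-i)).coeff 1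
      = bernoulli' i * (r.choose i : ℚ) := by
    intro i hi
    rw [Polynomial.coeff_C_mul, Polynomial.coeff_X_add_one_pow, Nat.choose_one_right]
    have hnat : (r+1).choose i * (r+1-i) = (r+1) * r.choose i := by
      rw [← Nat.choose_succ_right_eq, Nat.add_one_mul_choose_eq]
    have hq : ((r+1).choose i : ℚ) * ((r+1-i : ℕ):ℚ) = ((r:ℚ)+1) * (r.choose i : ℚ) := by
      rw [← Nat.cast_mul, hnat]
      push_cast
      ring
    have hne : ((r:ℚ)+1) ≠ 0 := by positivity
    field_simp
    rw [mul_assoc, hq]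
    ring
  rw [Finset.sum_congr rfl hterm, Finset.sum_range_succ, Nat.choose_self]
  have := sum_bernoulli' r
  rw [Finset.sum_congr rfl (fun i _ => mul_comm (bernoulli' i) ((r.choose i : ℚ))), this]
  simp

noncomputable def Epoly : ℕ → Polynomial ℚ
  | 0 => 1
  | (n+1) => Polynomial.C (1/((n:ℚ)+1)) * ∑ r ∈ Finset.range (n+1), Q (r+1) * Epoly (n - r)
  decreasing_by exact Nat.lt_succ_of_le (Nat.sub_le n r)

lemma Epoly_eval : ∀ n : ℕ, ∀ k : ℕ, (Epoly n).eval (k:ℚ) = Hq n (k+1) := by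
  intro n
  induction n using Nat.strong_induction_on with
  | _ n IH =>
    match n with
    | 0 =>
      intro k
      simp [Epoly, Hq_zero]
    | (n+1) =>
      intro k
      rw [Epoly, Polynomial.eval_mul, Polynomial.eval_C, Polynomial.eval_finset_sum]
      have hterm : ∀ r ∈ Finset.range (n+1),
          ((Q (r+1)) * Epoly (n-r)).eval (k:ℚ)
            = Pq (r+1) (k+1) * Hq ((n+1)-(r+1)) (k+1) := by
        intro r hr
        rw [Polynomial.eval_mul, Q_eval, IH (n-r) (Nat.lt_succ_of_le (Nat.sub_le n r)) k]
        rw [Nat.succ_sub_succ]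
      rw [Finset.sum_congr rfl hterm, ← newton (k+1) (n+1)]
      have hne : ((n:ℚ)+1) ≠ 0 := by positivity
      push_cast
      field_simp

lemma Epoly_coeff_zero (n : ℕ) : (Epoly n).coeff 0 = 1 := by
  rw [Polynomial.coeff_zero_eq_eval_zero]
  have h := Epoly_eval n 0
  simp only [Nat.cast_zero] at h
  rw [h, Hq_one]

lemma coeff_one_mul (p q : Polynomial ℚ) :
    (p * q).coeff 1 = p.coeff 0 * q.coeff 1 + p.coeff 1 * q.coeff 0 := by
  rw [Polynomial.coeff_mul]
  have h : Finset.HasAntidiagonal.antidiagonal (1:ℕ) = {(0,1),(1,0)} := by decide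
  rw [h, Finset.sum_insert (by decide), Finset.sum_singleton]

lemma count_lemma (f : ℕ → ℚ) : ∀ n : ℕ,
    ∑ m ∈ Finset.range (n+1), ∑ j ∈ Finset.Icc 1 m, f j
      = ∑ j ∈ Finset.Icc 1 n, (((n:ℚ)+1) - (j:ℚ)) * f j := by
  intro n
  induction n with
  | zero => simp
  | succ n IH =>
    rw [Finset.sum_range_succ, IH]
    push_cast
    have h2 : ∑ j ∈ Finset.Icc 1 (n+1), ((n:ℚ)+1+1-(j:ℚ)) * f j
        = (∑ j ∈ Finset.Icc 1 n, ((n:ℚ)+1-(j:ℚ)) * f j) + ∑ j ∈ Finset.Icc 1 (n+1), f j := by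
      have h1 : ∀ j ∈ Finset.Icc 1 (n+1), ((n:ℚ)+1+1-(j:ℚ)) * f j
          = ((n:ℚ)+1-(j:ℚ)) * f j + f j := fun j _ => by ring
      rw [Finset.sum_congr rfl h1, Finset.sum_add_distrib,
        Finset.sum_Icc_succ_top (by omega : 1 ≤ n+1) (fun j => ((n:ℚ)+1-(j:ℚ)) * f j)]
      push_cast
      ring
    rw [h2]

lemma Epoly_coeff_one : ∀ n : ℕ, (Epoly n).coeff 1
    = (n:ℚ) + ∑ j ∈ Finset.Icc 1 n, bernoulli' j / (j:ℚ) := by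
  intro n
  induction n using Nat.strong_induction_on with
  | _ n IH =>
    match n with
    | 0 => simp [Epoly, Polynomial.coeff_one]
    | (n+1) =>
      rw [Epoly, Polynomial.coeff_C_mul, Polynomial.finset_sum_coeff]
      have hterm : ∀ r ∈ Finset.range (n+1),
          (Q (r+1) * Epoly (n-r)).coeff 1
            = (((n-r:ℕ):ℚ) + ∑ j ∈ Finset.Icc 1 (n-r), bernoulli' j / (j:ℚ))
              + (((r:ℚ)+1) + bernoulli' (r+1)) := by
        intro r hr
        have hq0 : (Q (r+1)).coeff 0 = 1 := by
          rw [Polynomial.coeff_zero_eq_eval_zero, Q_eval_zero]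
        rw [coeff_one_mul, hq0, one_mul, Epoly_coeff_zero, mul_one,
          IH (n-r) (Nat.lt_succ_of_le (Nat.sub_le n r)), Q_coeff_one]
        push_cast
        ring
      rw [Finset.sum_congr rfl hterm, Finset.sum_add_distrib]
      have hrefl : ∑ r ∈ Finset.range (n+1),
          (((n-r:ℕ):ℚ) + ∑ j ∈ Finset.Icc 1 (n-r), bernoulli' j / (j:ℚ))
          = ∑ m ∈ Finset.range (n+1), ((m:ℚ) + ∑ j ∈ Finset.Icc 1 m, bernoulli' j / (j:ℚ)) := by
        have h := Finset.sum_range_reflect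
          (fun m => ((m:ℚ) + ∑ j ∈ Finset.Icc 1 m, bernoulli' j / (j:ℚ))) (n+1)
        simpa using h
      rw [hrefl]
      have hne : ((n:ℚ)+1) ≠ 0 := by positivity
      have hsum_nat : (∑ m ∈ Finset.range (n+1), (m:ℚ)) * 2 = ((n:ℚ)+1) * (n:ℚ) := by
        have h := Finset.sum_range_id_mul_two (n+1)
        have h2 := congrArg (Nat.cast : ℕ → ℚ) h
        push_cast at h2
        convert h2 using 2
      have hC : ∑ r ∈ Finset.range (n+1), bernoulli' (r+1)
          = ∑ j ∈ Finset.Icc 1 (n+1), bernoulli' j := by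
        rw [← Finset.Ico_add_one_right_eq_Icc, Finset.sum_Ico_eq_sum_range]
        simp [add_comm]
      have hD : ∑ m ∈ Finset.range (n+1), ∑ j ∈ Finset.Icc 1 m, bernoulli' j / (j:ℚ)
          = ∑ j ∈ Finset.Icc 1 n, (((n:ℚ)+1) - (j:ℚ)) * (bernoulli' j / (j:ℚ)) :=
        count_lemma (fun j => bernoulli' j / (j:ℚ)) n
      have hE : ∑ j ∈ Finset.Icc 1 n, (((n:ℚ)+1) - (j:ℚ)) * (bernoulli' j / (j:ℚ))
          = ∑ j ∈ Finset.Icc 1 (n+1), (((n:ℚ)+1) - (j:ℚ)) * (bernoulli' j / (j:ℚ)) := by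
        rw [Finset.sum_Icc_succ_top (by omega : 1 ≤ n+1)]
        have h0 : ((n:ℚ)+1) - (((n+1:ℕ)):ℚ) = 0 := by push_cast; ring
        rw [h0, zero_mul, add_zero]
      have hF : ∑ j ∈ Finset.Icc 1 (n+1), (((n:ℚ)+1) - (j:ℚ)) * (bernoulli' j / (j:ℚ))
            + ∑ j ∈ Finset.Icc 1 (n+1), bernoulli' j
          = ((n:ℚ)+1) * ∑ j ∈ Finset.Icc 1 (n+1), bernoulli' j / (j:ℚ) := by
        rw [← Finset.sum_add_distrib, Finset.mul_sum]
        refine Finset.sum_congr rfl ?_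
        intro j hj
        have hj1 : 1 ≤ j := (Finset.mem_Icc.mp hj).1
        have hjne : (j:ℚ) ≠ 0 := by
          have : (0:ℚ) < j := by exact_mod_cast hj1
          exact ne_of_gt this
        field_simp
        ring
      rw [Finset.sum_add_distrib, Finset.sum_add_distrib, hD, hE, hC]
      have hconst : ∑ _r ∈ Finset.range (n+1), (1:ℚ) = (n:ℚ)+1 := by
        rw [Finset.sum_const, Finset.card_range]
        push_cast
        ring
      have expand : ∑ r ∈ Finset.range (n+1), ((r:ℚ)+1)
          = (∑ r ∈ Finset.range (n+1), (r:ℚ)) + ((n:ℚ)+1) := by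
        rw [Finset.sum_add_distrib, hconst]
      rw [expand]
      push_cast
      rw [one_div, inv_mul_eq_div, div_eq_iff hne]
      linear_combination hF + hsum_nat

theorem stmt_12 (n : ℕ) (hn : 0 < n) (E : Polynomial ℚ)
    (hval : ∀ k : ℕ, E.eval (k : ℚ) = hNat n (k + 1)) :
    E.coeff 1 = (n : ℚ) + ∑ j ∈ Finset.Icc 1 n, bernoulli' j / j := by
  have hE : E = Epoly n := by
    apply Polynomial.eq_of_infinite_eval_eq
    have hinf : (Set.range (Nat.cast : ℕ → ℚ)).Infinite :=
      Set.infinite_range_of_injective Nat.cast_injective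
    refine Set.Infinite.mono ?_ hinf
    rintro x ⟨k, rfl⟩
    simp only [Set.mem_setOf_eq]
    rw [hval k, Epoly_eval n k]
    rfl
  rw [hE, Epoly_coeff_one]
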